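/- arXiv:1606.00859 — 5 statements merged into one kernel-verified Lean document; each statement's English description precedes it below -/
import Mathlib

section
/- Let H be a real Hilbert space and A : H →L[ℝ] H a bounded self-adjoint operator that is positive semidefinite, i.e. ⟪x, A x⟫ ≥ 0 for all x ∈ H. If Q : ℝ → H is a solution of the linearized evolution equation Q''(t) = −A (Q(t)) with Q'(0) = 0, then ‖Q(t)‖ ≤ ‖Q(0)‖ for all t ∈ ℝ. -/
open scoped RealInnerProductSpace

/-- If the bounded self-adjoint operator `A` is positive semidefinite, then any
solution of `Q'' = -A Q` with vanishing initial velocity satisfies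
`‖Q(t)‖ ≤ ‖Q(0)‖` for all `t` (mode stability). -/
theorem stmt_2 {H : Type*} [NormedAddCommGroup H] [InnerProductSpace ℝ H]
    [CompleteSpace H] (A : H →L[ℝ] H)
    (hA : ∀ x y : H, ⟪A x, y⟫ = ⟪x, A y⟫)
    (hpos : ∀ x : H, 0 ≤ ⟪x, A x⟫) (Q : ℝ → H)
    (hQ : Differentiable ℝ Q) (hQ' : Differentiable ℝ (deriv Q))
    (hEq : ∀ t : ℝ, deriv (deriv Q) t = -A (Q t))
    (h0 : deriv Q 0 = 0) :
    ∀ t : ℝ, ‖Q t‖ ≤ ‖Q 0‖ := by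
  set S : ℝ → H := fun t => ∫ s in (0:ℝ)..t, Q s with hSdef
  have hQc : Continuous Q := hQ.continuous
  have hS : ∀ t : ℝ, HasDerivAt S (Q t) t := by
    intro t
    exact intervalIntegral.integral_hasDerivAt_right
      (hQc.intervalIntegrable _ _)
      hQc.aestronglyMeasurable.stronglyMeasurableAtFilter
      hQc.continuousAt
  have hS0 : S 0 = 0 := by simp [hSdef]
  have hAS : ∀ t : ℝ, HasDerivAt (fun t => A (S t)) (A (Q t)) t := fun t =>
    A.hasFDerivAt.comp_hasDerivAt t (hS t)
  -- The function g = Q' + A ∘ S has derivative 0, hence is constant, equal to 0.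
  have hg : ∀ t : ℝ, deriv Q t = - A (S t) := by
    have hgd : ∀ t : ℝ, HasDerivAt (fun t => deriv Q t + A (S t)) 0 t := by
      intro t
      have h1 : HasDerivAt (deriv Q) (deriv (deriv Q) t) t := (hQ' t).hasDerivAt
      have := h1.add (hAS t)
      rw [hEq t, neg_add_cancel] at this
      exact this
    intro t
    have hconst : deriv Q t + A (S t) = deriv Q 0 + A (S 0) :=
      is_const_of_deriv_eq_zero (fun x => (hgd x).differentiableAt)
        (fun x => (hgd x).deriv) t 0
    rw [h0, hS0, map_zero, add_zero] at hconst
    exact eq_neg_of_add_eq_zero_left hconst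
  -- The energy E t = ‖Q t‖² + ⟪S t, A (S t)⟫ is conserved.
  set E : ℝ → ℝ := fun t => ⟪Q t, Q t⟫ + ⟪S t, A (S t)⟫ with hEdef
  have hEd : ∀ t : ℝ, HasDerivAt E 0 t := by
    intro t
    have h1 : HasDerivAt (fun t => ⟪Q t, Q t⟫)
        (⟪Q t, deriv Q t⟫ + ⟪deriv Q t, Q t⟫) t :=
      (hQ t).hasDerivAt.inner ℝ (hQ t).hasDerivAt
    have h2 : HasDerivAt (fun t => ⟪S t, A (S t)⟫)
        (⟪S t, A (Q t)⟫ + ⟪Q t, A (S t)⟫) t :=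
      (hS t).inner ℝ (hAS t)
    have h3 := h1.add h2
    have key : (⟪Q t, deriv Q t⟫ + ⟪deriv Q t, Q t⟫) +
        (⟪S t, A (Q t)⟫ + ⟪Q t, A (S t)⟫) = 0 := by
      rw [hg t]
      have e1 : ⟪S t, A (Q t)⟫ = ⟪A (S t), Q t⟫ := (hA (S t) (Q t)).symm
      have e2 : ⟪Q t, -A (S t)⟫ = - ⟪Q t, A (S t)⟫ := inner_neg_right _ _
      have e3 : ⟪-A (S t), Q t⟫ = - ⟪A (S t), Q t⟫ := inner_neg_left _ _
      have e4 : ⟪Q t, A (S t)⟫ = ⟪A (S t), Q t⟫ := real_inner_comm _ _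
      rw [e2, e3, e1, e4]; ring
    rw [← key]
    exact h3
  have hE : ∀ t : ℝ, E t = E 0 := fun t =>
    is_const_of_deriv_eq_zero (fun x => (hEd x).differentiableAt)
      (fun x => (hEd x).deriv) t 0
  intro t
  have h1 : ⟪Q t, Q t⟫ ≤ ⟪Q 0, Q 0⟫ := by
    have := hE t
    rw [hEdef] at this
    simp only [hS0, map_zero, inner_zero_left, add_zero] at this
    have := hpos (S t)
    linarith [hE t, hpos (S t)]
  rw [real_inner_self_eq_norm_sq, real_inner_self_eq_norm_sq] at h1
  nlinarith [norm_nonneg (Q t), norm_nonneg (Q 0)]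
end

section
/- Let H be a real Hilbert space, A : H →L[ℝ] H a bounded self-adjoint operator, Q₀ ∈ H with ⟪Q₀, A Q₀⟫ < 0, and let Q : ℝ → H be a solution of the linearized evolution equation Q''(t) = −A (Q(t)) with Q(0) = Q₀ and Q'(0) = 0. Then Q grows exponentially: there exist constants C > 0 and α > 0 such that ‖Q(t)‖ ≥ C · exp(α t) for all t ≥ 0. -/
open scoped RealInnerProductSpace

set_option maxHeartbeats 1000000 in
/-- If the initial data `Q₀` has negative potential energy `⟪Q₀, A Q₀⟫ < 0`,
then the solution of `Q'' = -A Q` with `Q 0 = Q₀`, `Q' 0 = 0` grows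
exponentially: `‖Q t‖ ≥ C exp (α t)` for all `t ≥ 0`, for some `C, α > 0`. -/
theorem stmt_3 {H : Type*} [NormedAddCommGroup H] [InnerProductSpace ℝ H]
    [CompleteSpace H] (A : H →L[ℝ] H)
    (hA : ∀ x y : H, ⟪A x, y⟫ = ⟪x, A y⟫)
    (Q₀ : H) (hneg : ⟪Q₀, A Q₀⟫ < 0) (Q : ℝ → H)
    (hQ : Differentiable ℝ Q) (hQ' : Differentiable ℝ (deriv Q))
    (hEq : ∀ t : ℝ, deriv (deriv Q) t = -A (Q t))
    (hQ0 : Q 0 = Q₀) (h0 : deriv Q 0 = 0) :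
    ∃ C > (0 : ℝ), ∃ α > (0 : ℝ), ∀ t : ℝ, 0 ≤ t →
      C * Real.exp (α * t) ≤ ‖Q t‖ := by
  have hlin : ∀ (c : ℝ) (x : ℝ), HasDerivAt (fun t : ℝ => c * t) c x := fun c x => by
    simpa using (hasDerivAt_id x).const_mul c
  set a : ℝ := -⟪Q₀, A Q₀⟫ with ha_def
  have ha : 0 < a := by simp [ha_def]; linarith
  set I : ℝ → ℝ := fun t => ⟪Q t, Q t⟫ with hI_def
  set J : ℝ → ℝ := fun t => 2 * ⟪Q t, deriv Q t⟫ with hJ_def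
  -- derivative of I
  have hI' : ∀ t, HasDerivAt I (J t) t := by
    intro t
    have := HasDerivAt.inner ℝ (hQ t).hasDerivAt (hQ t).hasDerivAt
    simpa [hJ_def, hI_def, real_inner_comm, two_mul] using this
  -- derivative of A ∘ Q
  have hAQ : ∀ t, HasDerivAt (fun t => A (Q t)) (A (deriv Q t)) t := by
    intro t
    exact A.hasFDerivAt.comp_hasDerivAt t (hQ t).hasDerivAt
  -- energy conservation
  have hE : ∀ t, ⟪deriv Q t, deriv Q t⟫ + ⟪Q t, A (Q t)⟫ = -a := by
    have hdiff : Differentiable ℝ (fun t => ⟪deriv Q t, deriv Q t⟫ + ⟪Q t, A (Q t)⟫) := by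
      refine Differentiable.add (fun t => DifferentiableAt.inner ℝ (hQ' t) (hQ' t))
        (fun t => DifferentiableAt.inner ℝ (hQ t) (hAQ t).differentiableAt)
    have hd0 : ∀ t, deriv (fun t => ⟪deriv Q t, deriv Q t⟫ + ⟪Q t, A (Q t)⟫) t = 0 := by
      intro t
      have h1 : HasDerivAt (fun t => deriv Q t) (deriv (deriv Q) t) t := (hQ' t).hasDerivAt
      have h2 := HasDerivAt.inner ℝ h1 h1
      have h3 := HasDerivAt.inner ℝ (hQ t).hasDerivAt (hAQ t)
      have h4 := (h2.add h3).deriv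
      rw [show (fun t => ⟪deriv Q t, deriv Q t⟫ + ⟪Q t, A (Q t)⟫) = (fun t => ⟪deriv Q t, deriv Q t⟫) + (fun t => ⟪Q t, A (Q t)⟫) from rfl, h4, hEq t]
      have e1 : ⟪Q t, A (deriv Q t)⟫ = ⟪deriv Q t, A (Q t)⟫ := by
        rw [← hA, real_inner_comm]
      have e2 : ⟪A (Q t), deriv Q t⟫ = ⟪deriv Q t, A (Q t)⟫ := real_inner_comm _ _
      simp only [inner_neg_right, inner_neg_left, e1, e2]
      ring
    intro t
    have := is_const_of_deriv_eq_zero hdiff hd0 t 0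
    rw [this, h0, hQ0]
    simp [ha_def]
  -- second derivative of I
  have hJ' : ∀ t, HasDerivAt J (4 * ⟪deriv Q t, deriv Q t⟫ + 2 * a) t := by
    intro t
    have h1 : HasDerivAt (fun t => deriv Q t) (deriv (deriv Q) t) t := (hQ' t).hasDerivAt
    have h2 : HasDerivAt J (2 * (⟪Q t, deriv (deriv Q) t⟫ + ⟪deriv Q t, deriv Q t⟫)) t :=
      (HasDerivAt.inner ℝ (hQ t).hasDerivAt h1).const_mul (2:ℝ)
    have hEt := hE t
    convert h2 using 1
    rw [hEq t, inner_neg_right]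
    linarith
  have hJ0 : J 0 = 0 := by simp [hJ_def, h0]
  have hKpos : ∀ t, 0 < 4 * ⟪deriv Q t, deriv Q t⟫ + 2 * a := by
    intro t
    have := real_inner_self_nonneg (x := deriv Q t)
    linarith
  have hJdiff : Differentiable ℝ J := fun t => (hJ' t).differentiableAt
  have hJderiv : ∀ t, deriv J t = 4 * ⟪deriv Q t, deriv Q t⟫ + 2 * a :=
    fun t => (hJ' t).deriv
  have hJmono : StrictMono J := by
    apply strictMono_of_deriv_pos
    intro t
    rw [hJderiv t]; exact hKpos t
  have hJnonneg : ∀ t, 0 ≤ t → 0 ≤ J t := by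
    intro t ht
    rcases eq_or_lt_of_le ht with h | h
    · rw [← h, hJ0]
    · rw [← hJ0]; exact (hJmono h).le
  have hIdiff : Differentiable ℝ I := fun t => (hI' t).differentiableAt
  have hIderiv : ∀ t, deriv I t = J t := fun t => (hI' t).deriv
  -- I is monotone on [0, ∞)
  have hImono : MonotoneOn I (Set.Ici 0) := by
    apply monotoneOn_of_deriv_nonneg (convex_Ici 0) hIdiff.continuous.continuousOn
    · exact hIdiff.differentiableOn
    · intro t ht
      rw [hIderiv t]
      exact hJnonneg t (le_of_lt (by simpa using ht))
  have hI0 : I 0 = ⟪Q₀, Q₀⟫ := by simp [hI_def, hQ0]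
  have hQ₀ne : Q₀ ≠ 0 := by
    intro h
    rw [h] at hneg
    simp at hneg
  have hI0pos : 0 < I 0 := by
    rw [hI0]
    rcases (real_inner_self_nonneg (x := Q₀)).lt_or_eq with h | h
    · exact h
    · exact absurd (real_inner_self_nonpos.1 h.ge) hQ₀ne
  have hIpos : ∀ t, 0 ≤ t → 0 < I t := by
    intro t ht
    exact lt_of_lt_of_le hI0pos (hImono Set.self_mem_Ici ht ht)
  -- Gronwall bound on [0,1]
  set R : ℝ := ‖Q₀‖ * Real.exp (1 + ‖A‖) with hR_def
  have hQ₀norm : 0 < ‖Q₀‖ := norm_pos_iff.2 hQ₀ne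
  have hRpos : 0 < R := mul_pos hQ₀norm (Real.exp_pos _)
  have hgron : ∀ t ∈ Set.Icc (0:ℝ) 1, ‖Q t‖ ≤ R := by
    set f : ℝ → H × H := fun t => (Q t, deriv Q t) with hf_def
    have hf' : ∀ t, HasDerivAt f (deriv Q t, -A (Q t)) t := by
      intro t
      have := ((hQ t).hasDerivAt).prodMk ((hQ' t).hasDerivAt)
      rwa [hEq t] at this
    have hb := norm_le_gronwallBound_of_norm_deriv_right_le (f := f)
      (f' := fun t => (deriv Q t, -A (Q t))) (δ := ‖Q₀‖) (K := 1 + ‖A‖) (ε := 0)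
      (a := 0) (b := 1)
      (fun t _ => (hf' t).continuousAt.continuousWithinAt)
      (fun t _ => (hf' t).hasDerivWithinAt)
      (by simp [hf_def, hQ0, h0, Prod.norm_def])
      ?_
    · intro t ht
      have h1 := hb t ht
      rw [gronwallBound_ε0] at h1
      have h2 : ‖Q t‖ ≤ ‖f t‖ := by
        rw [hf_def, Prod.norm_def]
        exact le_max_left _ _
      have h3 : Real.exp ((1 + ‖A‖) * (t - 0)) ≤ Real.exp (1 + ‖A‖) := by
        apply Real.exp_le_exp.2
        have hApos : (0:ℝ) ≤ ‖A‖ := norm_nonneg _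
        nlinarith [ht.1, ht.2]
      calc ‖Q t‖ ≤ ‖f t‖ := h2
        _ ≤ ‖Q₀‖ * Real.exp ((1 + ‖A‖) * (t - 0)) := h1
        _ ≤ R := by
            rw [hR_def]
            exact mul_le_mul_of_nonneg_left h3 (norm_nonneg _)
    · intro t _
      rw [Prod.norm_def, Prod.norm_def]
      simp only [norm_neg]
      have h1 : ‖deriv Q t‖ ≤ max ‖Q t‖ ‖deriv Q t‖ := le_max_right _ _
      have h2 : ‖A (Q t)‖ ≤ ‖A‖ * ‖Q t‖ := A.le_opNorm _
      have h3 : ‖Q t‖ ≤ max ‖Q t‖ ‖deriv Q t‖ := le_max_left _ _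
      have hApos : (0:ℝ) ≤ ‖A‖ := norm_nonneg _
      have h4 : (0:ℝ) ≤ max ‖Q t‖ ‖deriv Q t‖ := le_trans (norm_nonneg _) h3
      apply max_le <;> nlinarith
  set M : ℝ := R ^ 2 with hM_def
  have hMpos : 0 < M := by positivity
  have hIM : ∀ t ∈ Set.Icc (0:ℝ) 1, I t ≤ M := by
    intro t ht
    have h1 := hgron t ht
    have : I t = ‖Q t‖ ^ 2 := by
      rw [hI_def]; exact real_inner_self_eq_norm_sq _
    rw [this, hM_def]
    exact pow_le_pow_left₀ (norm_nonneg _) h1 2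
  -- the logarithmic derivative v = J / I
  set v : ℝ → ℝ := fun t => J t / I t with hv_def
  have hv' : ∀ t, 0 ≤ t → HasDerivAt v
      (((4 * ⟪deriv Q t, deriv Q t⟫ + 2 * a) * I t - J t * J t) / (I t ^ 2)) t := by
    intro t ht
    have := (hJ' t).div (hI' t) (hIpos t ht).ne'
    simpa [hv_def, mul_comm, Pi.div_def] using this
  -- lower bound on the numerator via Cauchy-Schwarz
  have hnum : ∀ t, 2 * a * I t ≤
      (4 * ⟪deriv Q t, deriv Q t⟫ + 2 * a) * I t - J t * J t := by
    intro t
    have hcs := real_inner_mul_inner_self_le (Q t) (deriv Q t)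
    have : J t * J t = 4 * (⟪Q t, deriv Q t⟫ * ⟪Q t, deriv Q t⟫) := by
      rw [hJ_def]; ring
    rw [this]
    have hInn : I t = ⟪Q t, Q t⟫ := rfl
    nlinarith [hcs]
  have hvderiv_nonneg : ∀ t, 0 ≤ t → 0 ≤ ((4 * ⟪deriv Q t, deriv Q t⟫ + 2 * a) * I t - J t * J t) / (I t ^ 2) := by
    intro t ht
    apply div_nonneg _ (sq_nonneg _)
    have := hnum t
    have := (hIpos t ht).le
    nlinarith
  -- v 1 ≥ 2a/M
  set β : ℝ := a / M with hβ_def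
  have hβpos : 0 < β := div_pos ha hMpos
  have hv1 : 2 * β ≤ v 1 := by
    have hmono : MonotoneOn (fun t => v t - (2 * β) * t) (Set.Icc 0 1) := by
      apply monotoneOn_of_deriv_nonneg (convex_Icc 0 1)
      · apply ContinuousOn.sub _ (by fun_prop)
        intro x hx
        exact ((hv' x hx.1).continuousAt).continuousWithinAt
      · intro x hx
        rw [interior_Icc] at hx
        exact (((hv' x hx.1.le).sub (hlin (2*β) x)).differentiableAt).differentiableWithinAt
      · intro x hx
        rw [interior_Icc] at hx
        have hd := ((hv' x hx.1.le).sub (hlin (2*β) x)).deriv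
        rw [show (fun t => v t - 2 * β * t) = v - (fun t => 2 * β * t) from rfl, hd]
        have hIx : 0 < I x := hIpos x hx.1.le
        have hIxM : I x ≤ M := hIM x ⟨hx.1.le, hx.2.le⟩
        have h1 : 2 * a * I x ≤ (4 * ⟪deriv Q x, deriv Q x⟫ + 2 * a) * I x - J x * J x := hnum x
        have h2 : 2 * a / I x ≤ ((4 * ⟪deriv Q x, deriv Q x⟫ + 2 * a) * I x - J x * J x) / I x ^ 2 := by
          rw [div_le_div_iff₀ hIx (by positivity)]
          nlinarith
        have hba : β * M = a := div_mul_cancel₀ a hMpos.ne'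
        have h3 : 2 * β ≤ 2 * a / I x := by
          rw [le_div_iff₀ hIx]
          nlinarith
        linarith
    have h01 : (0:ℝ) ∈ Set.Icc (0:ℝ) 1 := by norm_num
    have h11 : (1:ℝ) ∈ Set.Icc (0:ℝ) 1 := by norm_num
    have := hmono h01 h11 (by norm_num)
    have hv0 : v 0 = 0 := by simp [hv_def, hJ0]
    simp only [hv0] at this
    linarith
  -- v is monotone on [1, ∞), hence v t ≥ 2β for t ≥ 1
  have hvmono : MonotoneOn v (Set.Ici 1) := by
    apply monotoneOn_of_deriv_nonneg (convex_Ici 1)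
    · intro x hx
      exact ((hv' x (by linarith [Set.mem_Ici.1 hx])).continuousAt).continuousWithinAt
    · intro x hx
      rw [interior_Ici] at hx
      exact ((hv' x (by linarith [Set.mem_Ioi.1 hx])).differentiableAt).differentiableWithinAt
    · intro x hx
      rw [interior_Ici] at hx
      have hx1 : (0:ℝ) ≤ x := by linarith [Set.mem_Ioi.1 hx]
      rw [(hv' x hx1).deriv]
      exact hvderiv_nonneg x hx1
  have hvge : ∀ t, 1 ≤ t → 2 * β ≤ v t := by
    intro t ht
    exact le_trans hv1 (hvmono (Set.self_mem_Ici) (Set.mem_Ici.2 ht) ht)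
  -- the log of I grows linearly for t ≥ 1
  have hL' : ∀ t, 0 ≤ t → HasDerivAt (fun t => Real.log (I t)) (v t) t := by
    intro t ht
    exact (hI' t).log (hIpos t ht).ne'
  have hLmono : MonotoneOn (fun t => Real.log (I t) - (2 * β) * t) (Set.Ici 1) := by
    apply monotoneOn_of_deriv_nonneg (convex_Ici 1)
    · intro x hx
      have h1 : (0:ℝ) ≤ x := by linarith [Set.mem_Ici.1 hx]
      exact (((hL' x h1).sub (hlin (2*β) x)).continuousAt).continuousWithinAt
    · intro x hx
      rw [interior_Ici] at hx
      have h1 : (0:ℝ) ≤ x := by linarith [Set.mem_Ioi.1 hx]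
      exact (((hL' x h1).sub (hlin (2*β) x)).differentiableAt).differentiableWithinAt
    · intro x hx
      rw [interior_Ici] at hx
      have h1 : (0:ℝ) ≤ x := by linarith [Set.mem_Ioi.1 hx]
      rw [show (fun t => Real.log (I t) - 2 * β * t) = (fun t => Real.log (I t)) - (fun t => 2 * β * t) from rfl, ((hL' x h1).sub (hlin (2*β) x)).deriv]
      have := hvge x (Set.mem_Ioi.1 hx).le
      linarith
  -- main growth estimate: I t ≥ I 0 * exp (2β (t - 1)) for t ≥ 0
  have hIgrow : ∀ t, 0 ≤ t → I 0 * Real.exp (2 * β * (t - 1)) ≤ I t := by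
    intro t ht
    rcases le_total t 1 with h | h
    · have h1 : Real.exp (2 * β * (t - 1)) ≤ 1 := by
        apply Real.exp_le_one_iff.2
        nlinarith
      have h2 : I 0 ≤ I t := hImono Set.self_mem_Ici ht ht
      nlinarith [hI0pos.le]
    · have := hLmono Set.self_mem_Ici (Set.mem_Ici.2 h) h
      have hL1 : Real.log (I 0) ≤ Real.log (I 1) := by
        apply Real.log_le_log hI0pos (hImono Set.self_mem_Ici (by norm_num) (by norm_num))
      have hlog : Real.log (I 0) + 2 * β * (t - 1) ≤ Real.log (I t) := by
        simp only at this
        linarith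
      have := Real.exp_le_exp.2 hlog
      rwa [Real.exp_add, Real.exp_log hI0pos, Real.exp_log (hIpos t ht)] at this
  -- conclusion
  refine ⟨‖Q₀‖ * Real.exp (-β), by positivity, β, hβpos, fun t ht => ?_⟩
  have hsq : (‖Q₀‖ * Real.exp (-β) * Real.exp (β * t)) ^ 2 ≤ ‖Q t‖ ^ 2 := by
    have h1 : I t = ‖Q t‖ ^ 2 := real_inner_self_eq_norm_sq _
    have h2 : I 0 = ‖Q₀‖ ^ 2 := by rw [hI0]; exact real_inner_self_eq_norm_sq _
    have h3 := hIgrow t ht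
    rw [h1, h2] at *
    have he : Real.exp (-β) * Real.exp (β * t) = Real.exp (β * (t - 1)) := by
      rw [← Real.exp_add]; ring_nf
    have he2 : Real.exp (β * (t - 1)) ^ 2 = Real.exp (2 * β * (t - 1)) := by
      rw [sq, ← Real.exp_add]; ring_nf
    calc (‖Q₀‖ * Real.exp (-β) * Real.exp (β * t)) ^ 2
        = ‖Q₀‖ ^ 2 * Real.exp (β * (t - 1)) ^ 2 := by rw [mul_assoc, he, mul_pow]
      _ = ‖Q₀‖ ^ 2 * Real.exp (2 * β * (t - 1)) := by rw [he2]
      _ ≤ ‖Q t‖ ^ 2 := h3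
  have h4 := Real.sqrt_le_sqrt hsq
  rwa [Real.sqrt_sq (by positivity), Real.sqrt_sq (norm_nonneg _)] at h4
end

section
/- Let H be a real Hilbert space, A : H →L[ℝ] H a bounded self-adjoint operator, and let α > 0 and Q₀ ∈ H satisfy ⟪Q₀, A Q₀⟫ < −α² ‖Q₀‖². If Q : ℝ → H is a solution of the linearized evolution equation Q''(t) = −A (Q(t)) with Q(0) = Q₀ and Q'(0) = 0, then exp(−2 α t) · ‖Q(t)‖² tends to infinity as t → ∞. -/
open scoped RealInnerProductSpace

set_option maxHeartbeats 1000000 in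
/-- Variational principle for instability: if `⟪Q₀, A Q₀⟫ < -α² ‖Q₀‖²` with
`α > 0`, then the solution of `Q'' = -A Q` with `Q 0 = Q₀`, `Q' 0 = 0`
satisfies `exp(-2αt) ‖Q t‖² → ∞` as `t → ∞`. -/
theorem stmt_4 {H : Type*} [NormedAddCommGroup H] [InnerProductSpace ℝ H]
    [CompleteSpace H] (A : H →L[ℝ] H)
    (hA : ∀ x y : H, ⟪A x, y⟫ = ⟪x, A y⟫)
    (α : ℝ) (hα : 0 < α) (Q₀ : H)
    (hneg : ⟪Q₀, A Q₀⟫ < -α ^ 2 * ‖Q₀‖ ^ 2) (Q : ℝ → H)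
    (hQ : Differentiable ℝ Q) (hQ' : Differentiable ℝ (deriv Q))
    (hEq : ∀ t : ℝ, deriv (deriv Q) t = -A (Q t))
    (hQ0 : Q 0 = Q₀) (h0 : deriv Q 0 = 0) :
    Filter.Tendsto (fun t : ℝ => Real.exp (-2 * α * t) * ‖Q t‖ ^ 2)
      Filter.atTop Filter.atTop := by
  classical
  have hQ₀ne : Q₀ ≠ 0 := by
    intro h
    rw [h] at hneg
    simp at hneg
  set q1 : ℝ → H := deriv Q with hq1def
  have hQd : ∀ t, HasDerivAt Q (q1 t) t := fun t => (hQ t).hasDerivAt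
  have hq1d : ∀ t, HasDerivAt q1 (-(A (Q t))) t := fun t => by
    have h := (hQ' t).hasDerivAt
    rw [hEq t] at h
    exact h
  have hAQd : ∀ t, HasDerivAt (fun s => A (Q s)) (A (q1 t)) t := fun t =>
    (A.hasFDerivAt.comp_hasDerivAt t (hQd t))
  set μ : ℝ := -⟪Q₀, A Q₀⟫ with hμdef
  set y₀ : ℝ := ‖Q₀‖ ^ 2 with hy₀def
  have hy₀pos : 0 < y₀ := by
    rw [hy₀def]
    exact pow_pos (norm_pos_iff.mpr hQ₀ne) 2
  have hμy : α ^ 2 * y₀ < μ := by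
    rw [hμdef]
    linarith
  have hμpos : 0 < μ := lt_of_le_of_lt (by positivity) hμy
  -- energy conservation
  have energy : ∀ t, ⟪q1 t, q1 t⟫ + ⟪Q t, A (Q t)⟫ = -μ := by
    have hder : ∀ t, HasDerivAt (fun s => ⟪q1 s, q1 s⟫ + ⟪Q s, A (Q s)⟫) 0 t := by
      intro t
      have h1 := (hq1d t).inner ℝ (hq1d t)
      have h2 := (hQd t).inner ℝ (hAQd t)
      have h3 := h1.add h2
      convert h3 using 1
      · rfl
      · rfl
      · rfl
      have c1 : ⟪A (Q t), q1 t⟫ = ⟪q1 t, A (Q t)⟫ := real_inner_comm _ _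
      have c2 : ⟪Q t, A (q1 t)⟫ = ⟪q1 t, A (Q t)⟫ := by
        rw [← hA]
        exact real_inner_comm _ _
      rw [inner_neg_right, inner_neg_left, c1, c2]
      ring
    have hconst := is_const_of_deriv_eq_zero
      (fun t => (hder t).differentiableAt) (fun t => (hder t).deriv)
    intro t
    have h4 := hconst t 0
    rw [h4, hQ0]
    have hq10 : q1 0 = 0 := h0
    rw [hq10]
    simp [hμdef]
  set y : ℝ → ℝ := fun t => ⟪Q t, Q t⟫ with hydef
  set p : ℝ → ℝ := fun t => 2 * ⟪Q t, q1 t⟫ with hpdef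
  have hyd : ∀ t, HasDerivAt y (p t) t := fun t => by
    have h := (hQd t).inner ℝ (hQd t)
    convert h using 1
    · rfl
    · rfl
    simp only [hpdef]
    linarith [real_inner_comm (q1 t) (Q t)]
  have hpd : ∀ t, HasDerivAt p (4 * ⟪q1 t, q1 t⟫ + 2 * μ) t := fun t => by
    have h := ((hQd t).inner ℝ (hq1d t)).const_mul (2 : ℝ)
    convert h using 1
    · rfl
    · rfl
    simp only [hpdef, inner_neg_right]
    linarith [energy t]
  have hp0 : p 0 = 0 := by
    rw [hpdef]
    have hq10 : q1 0 = 0 := h0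
    simp [hq10]
  have hy0 : y 0 = y₀ := by
    rw [hydef, hy₀def]
    simp only [hQ0]
    exact real_inner_self_eq_norm_sq Q₀
  have hnn : ∀ t, (0:ℝ) ≤ ⟪q1 t, q1 t⟫ := fun t => real_inner_self_nonneg
  -- p t ≥ 2 μ t for t ≥ 0
  have hpm : ∀ t, HasDerivAt (fun s => p s - 2*μ*s) (4 * ⟪q1 t, q1 t⟫) t := fun t => by
    have h := (hpd t).sub ((hasDerivAt_id t).const_mul (2*μ))
    convert h using 1
    · rfl
    · rfl
    · rfl
    ring
  have mono1 : Monotone (fun s => p s - 2*μ*s) :=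
    monotone_of_deriv_nonneg (fun t => (hpm t).differentiableAt)
      (fun t => by rw [(hpm t).deriv]; linarith [hnn t])
  have hppos : ∀ t, 0 ≤ t → 2*μ*t ≤ p t := by
    intro t ht
    have h := mono1 ht
    simp only [hp0] at h
    linarith
  have hpnn : ∀ t, 0 ≤ t → 0 ≤ p t := by
    intro t ht
    have h1 : 0 ≤ 2*μ*t := by positivity
    linarith [hppos t ht]
  -- y t ≥ y₀ + μ t² for t ≥ 0
  have hψd : ∀ t, HasDerivAt (fun s => y s - μ*s^2) (p t - 2*μ*t) t := fun t => by
    have h := (hyd t).sub ((hasDerivAt_pow 2 t).const_mul μ)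
    convert h using 1
    · rfl
    · rfl
    · rfl
    push_cast
    ring
  have ymono : MonotoneOn (fun s => y s - μ*s^2) (Set.Ici (0:ℝ)) := by
    apply monotoneOn_of_deriv_nonneg (convex_Ici 0)
    · exact fun t _ => (hψd t).differentiableAt.continuousAt.continuousWithinAt
    · intro t _
      exact (hψd t).differentiableAt.differentiableWithinAt
    · intro t ht
      rw [interior_Ici] at ht
      rw [(hψd t).deriv]
      linarith [hppos t ht.le]
  have hylb : ∀ t, 0 ≤ t → y₀ + μ*t^2 ≤ y t := by
    intro t ht
    have h := ymono Set.self_mem_Ici ht ht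
    simp only [hy0] at h
    nlinarith [h]
  have hypos : ∀ t, 0 ≤ t → 0 < y t := by
    intro t ht
    nlinarith [hylb t ht, sq_nonneg t]
  -- Cauchy-Schwarz
  have hCS : ∀ t, p t ^ 2 ≤ 4 * (y t * ⟪q1 t, q1 t⟫) := fun t => by
    have h := real_inner_mul_inner_self_le (Q t) (q1 t)
    simp only [hpdef, hydef]
    nlinarith [h]
  -- the monotone quantity r = (p² + 4 μ y)/y²
  have hrd : ∀ t, 0 < y t → HasDerivAt (fun s => (p s^2 + 4*μ*y s)/(y s)^2)
      (((2*p t*(4 * ⟪q1 t, q1 t⟫ + 2*μ) + 4*μ*p t) * (y t)^2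
        - (p t^2 + 4*μ*y t) * (2*y t*p t)) / ((y t)^2)^2) t := by
    intro t hyt
    have hnum : HasDerivAt (fun s => p s^2 + 4*μ*y s)
        (2*p t*(4 * ⟪q1 t, q1 t⟫ + 2*μ) + 4*μ*p t) t := by
      have h1 := (hpd t).pow 2
      have h2 := (hyd t).const_mul (4*μ)
      convert h1.add h2 using 1
      · rfl
      · rfl
      · rfl
      push_cast
      ring
    have hden : HasDerivAt (fun s => (y s)^2) (2*y t*p t) t := by
      have h := (hyd t).pow 2
      convert h using 1
      · rfl
      · rfl
      · rfl
      push_cast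
      ring
    exact hnum.div hden (by positivity)
  have rmono : MonotoneOn (fun s => (p s^2 + 4*μ*y s)/(y s)^2) (Set.Ici (0:ℝ)) := by
    apply monotoneOn_of_deriv_nonneg (convex_Ici 0)
    · intro t ht
      exact (hrd t (hypos t ht)).differentiableAt.continuousAt.continuousWithinAt
    · intro t ht
      rw [interior_Ici] at ht
      exact (hrd t (hypos t ht.le)).differentiableAt.differentiableWithinAt
    · intro t ht
      rw [interior_Ici] at ht
      have hyt := hypos t ht.le
      rw [(hrd t hyt).deriv]
      apply div_nonneg _ (by positivity)
      have hcs := hCS t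
      have hpn := hpnn t ht.le
      nlinarith [mul_nonneg (mul_nonneg hpn hyt.le)
        (by linarith : (0:ℝ) ≤ 4 * (y t * ⟪q1 t, q1 t⟫) - p t ^ 2)]
  have key : ∀ t, 0 ≤ t → 4*μ*(y t)^2 ≤ (p t^2 + 4*μ*y t) * y₀ := by
    intro t ht
    have h := rmono Set.self_mem_Ici ht ht
    simp only [hp0, hy0] at h
    have h0' : ((0:ℝ)^2 + 4*μ*y₀)/y₀^2 = 4*μ/y₀ := by
      field_simp
      ring
    rw [h0'] at h
    have hyt := hypos t ht
    rw [div_le_div_iff₀ hy₀pos (by positivity)] at h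
    linarith
  -- choose β with α < β < sqrt(μ/y₀)
  set ω : ℝ := Real.sqrt (μ/y₀) with hωdef
  have hαω : α < ω := by
    rw [hωdef, Real.lt_sqrt hα.le, lt_div_iff₀ hy₀pos]
    linarith
  set β : ℝ := (α + ω)/2 with hβdef
  have hαβ : α < β := by
    rw [hβdef]; linarith
  have hβpos : 0 < β := lt_trans hα hαβ
  have hβω : β^2 < μ/y₀ := by
    have hβω' : β < ω := by rw [hβdef]; linarith
    rw [hωdef] at hβω'
    exact (Real.lt_sqrt hβpos.le).mp hβω'
  set δ : ℝ := μ/y₀ - β^2 with hδdef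
  have hδpos : 0 < δ := by rw [hδdef]; linarith
  set C : ℝ := μ/δ with hCdef
  have hCpos : 0 < C := by rw [hCdef]; positivity
  set T : ℝ := Real.sqrt (C/μ) with hTdef
  have hTnn : 0 ≤ T := Real.sqrt_nonneg _
  have hyC : ∀ t, T ≤ t → C ≤ y t := by
    intro t ht
    have ht0 : 0 ≤ t := le_trans hTnn ht
    have h2 : T^2 = C/μ := Real.sq_sqrt (by positivity)
    have h3 : T^2 ≤ t^2 := pow_le_pow_left₀ hTnn ht 2
    have h4 := hylb t ht0
    have h6 : μ*T^2 = C := by rw [h2]; field_simp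
    have h7 := mul_le_mul_of_nonneg_left h3 hμpos.le
    linarith
  -- slope bound: p t ≥ 2 β y t for t ≥ T
  have hslope : ∀ t, T ≤ t → 2*β*y t ≤ p t := by
    intro t ht
    have ht0 : 0 ≤ t := le_trans hTnn ht
    have hyt := hypos t ht0
    have hk := key t ht0
    have hyC' := hyC t ht
    have h5 : μ ≤ y t * δ := by
      rw [hCdef] at hyC'
      exact (div_le_iff₀ hδpos).mp hyC'
    have hβ2 : β^2 * y₀ = μ - δ*y₀ := by
      rw [hδdef]
      field_simp
      ring
    have h4 : (2*β*y t)^2 ≤ p t^2 := by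
      nlinarith [mul_le_mul_of_nonneg_left h5 hyt.le, sq_nonneg (y t), hy₀pos,
        mul_pos hyt hyt]
    have h2βy : 0 ≤ 2*β*y t := by positivity
    exact (pow_le_pow_iff_left₀ h2βy (hpnn t ht0) (by norm_num)).mp h4
  -- logarithmic growth
  have hLd : ∀ t, 0 < y t → HasDerivAt (fun s => Real.log (y s) - 2*β*s)
      (p t / y t - 2*β) t := by
    intro t hyt
    have h := ((hyd t).log hyt.ne').sub ((hasDerivAt_id t).const_mul (2*β))
    convert h using 1
    · rfl
    · rfl
    · rfl
    ring
  have Lmono : MonotoneOn (fun s => Real.log (y s) - 2*β*s) (Set.Ici T) := by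
    apply monotoneOn_of_deriv_nonneg (convex_Ici T)
    · intro t ht
      exact (hLd t (hypos t (le_trans hTnn ht))).differentiableAt.continuousAt.continuousWithinAt
    · intro t ht
      rw [interior_Ici] at ht
      exact (hLd t (hypos t (le_trans hTnn ht.le))).differentiableAt.differentiableWithinAt
    · intro t ht
      rw [interior_Ici] at ht
      have hyt := hypos t (le_trans hTnn ht.le)
      rw [(hLd t hyt).deriv]
      rw [sub_nonneg, le_div_iff₀ hyt]
      linarith [hslope t ht.le]
  set c : ℝ := Real.exp (Real.log (y T) - 2*β*T) with hcdef
  have hcpos : 0 < c := Real.exp_pos _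
  have hfinal : ∀ t, T ≤ t →
      c * Real.exp ((2*β - 2*α)*t) ≤ Real.exp (-2*α*t) * ‖Q t‖^2 := by
    intro t ht
    have hyt := hypos t (le_trans hTnn ht)
    have hL : Real.log (y T) - 2*β*T ≤ Real.log (y t) - 2*β*t :=
      Lmono Set.self_mem_Ici ht ht
    have hyval : Real.exp (Real.log (y T) - 2*β*T + 2*β*t) ≤ y t := by
      rw [← Real.exp_log hyt]
      apply Real.exp_le_exp.mpr
      linarith
    have hnorm : ‖Q t‖^2 = y t := (real_inner_self_eq_norm_sq (Q t)).symm
    rw [hnorm]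
    calc c * Real.exp ((2*β - 2*α)*t)
        = Real.exp (-2*α*t) * Real.exp (Real.log (y T) - 2*β*T + 2*β*t) := by
          rw [hcdef, ← Real.exp_add, ← Real.exp_add]
          congr 1
          ring
      _ ≤ Real.exp (-2*α*t) * y t :=
          mul_le_mul_of_nonneg_left hyval (Real.exp_nonneg _)
  have hgrow : Filter.Tendsto (fun t => c * Real.exp ((2*β - 2*α)*t))
      Filter.atTop Filter.atTop := by
    apply Filter.Tendsto.const_mul_atTop hcpos
    have h1 : Filter.Tendsto (fun t : ℝ => (2*β - 2*α)*t) Filter.atTop Filter.atTop :=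
      Filter.Tendsto.const_mul_atTop (by linarith) Filter.tendsto_id
    exact Real.tendsto_exp_atTop.comp h1
  apply Filter.tendsto_atTop_mono' Filter.atTop _ hgrow
  filter_upwards [Filter.eventually_ge_atTop T] with t ht
  have h := hfinal t ht
  calc c * Real.exp ((2*β - 2*α)*t) ≤ Real.exp (-2*α*t) * ‖Q t‖^2 := h
    _ = Real.exp (-2*α*t) * ‖Q t‖^2 := rfl
end

section
/- Let H be a real Hilbert space, A : H →L[ℝ] H a bounded self-adjoint operator, and let α > 0 and Q₀ ∈ H satisfy ⟪Q₀, A Q₀⟫ < −α² ‖Q₀‖². If Q : ℝ → H is a solution of the linearized evolution equation Q''(t) = −A (Q(t)) with Q(0) = Q₀ and Q'(0) = 0, then exp(−2 α t) · ‖Q'(t)‖² tends to infinity as t → ∞, where Q' denotes the derivative of Q. -/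
open scoped RealInnerProductSpace
open Set Filter

private lemma monoIci {T : ℝ} {f f' : ℝ → ℝ} (hc : ContinuousOn f (Set.Ici T))
    (hd : ∀ x ∈ Set.Ioi T, HasDerivAt f (f' x) x)
    (hnn : ∀ x ∈ Set.Ioi T, 0 ≤ f' x) : MonotoneOn f (Set.Ici T) := by
  refine monotoneOn_of_hasDerivWithinAt_nonneg (f' := f') (convex_Ici T) hc
    (fun x hx => ?_) (fun x hx => ?_)
  · exact (hd x (by rwa [interior_Ici] at hx)).hasDerivWithinAt
  · exact hnn x (by rwa [interior_Ici] at hx)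

set_option maxHeartbeats 1000000 in
/-- Variational principle for instability, kinetic-energy form: if
`⟪Q₀, A Q₀⟫ < -α² ‖Q₀‖²` with `α > 0`, then the solution of `Q'' = -A Q` with
`Q 0 = Q₀`, `Q' 0 = 0` satisfies `exp(-2αt) ‖Q'(t)‖² → ∞` as `t → ∞`. -/
theorem stmt_5 {H : Type*} [NormedAddCommGroup H] [InnerProductSpace ℝ H]
    [CompleteSpace H] (A : H →L[ℝ] H)
    (hA : ∀ x y : H, ⟪A x, y⟫ = ⟪x, A y⟫)
    (α : ℝ) (hα : 0 < α) (Q₀ : H)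
    (hneg : ⟪Q₀, A Q₀⟫ < -α ^ 2 * ‖Q₀‖ ^ 2) (Q : ℝ → H)
    (hQ : Differentiable ℝ Q) (hQ' : Differentiable ℝ (deriv Q))
    (hEq : ∀ t : ℝ, deriv (deriv Q) t = -A (Q t))
    (hQ0 : Q 0 = Q₀) (h0 : deriv Q 0 = 0) :
    Filter.Tendsto (fun t : ℝ => Real.exp (-2 * α * t) * ‖deriv Q t‖ ^ 2)
      Filter.atTop Filter.atTop := by
  set Q' := deriv Q with hQ'def
  have hQd : ∀ t, HasDerivAt Q (Q' t) t := fun t => (hQ t).hasDerivAt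
  have hQ'd : ∀ t, HasDerivAt Q' (-A (Q t)) t := fun t => by
    have h := (hQ' t).hasDerivAt
    rwa [hEq t] at h
  set g : ℝ → ℝ := fun t => ⟪Q t, Q' t⟫ with hgdef
  set I : ℝ → ℝ := fun t => ⟪Q t, Q t⟫ with hIdef
  set K : ℝ → ℝ := fun t => ⟪Q' t, Q' t⟫ with hKdef
  set W : ℝ → ℝ := fun t => ⟪Q t, A (Q t)⟫ with hWdef
  set E : ℝ := ⟪Q₀, A Q₀⟫ with hEdef
  -- basic facts
  have hInorm : ∀ t, I t = ‖Q t‖ ^ 2 := fun t => real_inner_self_eq_norm_sq _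
  have hKnorm : ∀ t, K t = ‖Q' t‖ ^ 2 := fun t => real_inner_self_eq_norm_sq _
  have hKnn : ∀ t, 0 ≤ K t := fun t => real_inner_self_nonneg
  have hQ₀ne : Q₀ ≠ 0 := by
    rintro rfl
    simp [hEdef] at hneg
  have hQ₀pos : 0 < ‖Q₀‖ ^ 2 := pow_pos (norm_pos_iff.2 hQ₀ne) 2
  have hE : E < -α ^ 2 * ‖Q₀‖ ^ 2 := hneg
  have hEneg : E < 0 := lt_of_lt_of_le hE (by nlinarith)
  have hCS : ∀ t, g t ^ 2 ≤ I t * K t := fun t => by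
    have h := real_inner_mul_inner_self_le (Q t) (Q' t)
    rw [hInorm, hKnorm]
    simpa [sq] using h
  -- derivatives
  have hAQd : ∀ t, HasDerivAt (fun t => A (Q t)) (A (Q' t)) t := fun t =>
    A.hasFDerivAt.comp_hasDerivAt t (hQd t)
  have hId : ∀ t, HasDerivAt I (2 * g t) t := fun t => by
    have h := HasDerivAt.inner ℝ (hQd t) (hQd t)
    refine h.congr_deriv ?_
    have := real_inner_comm (Q t) (Q' t)
    linarith
  have hKd : ∀ t, HasDerivAt K (-2 * ⟪A (Q t), Q' t⟫) t := fun t => by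
    have h := HasDerivAt.inner ℝ (hQ'd t) (hQ'd t)
    refine h.congr_deriv ?_
    rw [inner_neg_right, inner_neg_left, real_inner_comm (Q' t) (A (Q t))]
    ring
  have hWd : ∀ t, HasDerivAt W (2 * ⟪A (Q t), Q' t⟫) t := fun t => by
    have h := HasDerivAt.inner ℝ (hQd t) (hAQd t)
    refine h.congr_deriv ?_
    rw [← hA (Q t) (Q' t), real_inner_comm (Q' t) (A (Q t))]
    ring
  -- energy conservation
  have hcons : ∀ t, K t + W t = E := by
    have hd0 : ∀ t, HasDerivAt (fun t => K t + W t) 0 t := fun t => by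
      have h := (hKd t).add (hWd t)
      refine h.congr_deriv ?_
      ring
    have hconst := is_const_of_deriv_eq_zero
      (fun t => (hd0 t).differentiableAt) (fun t => (hd0 t).deriv)
    intro t
    have h := hconst t 0
    rw [h, hKdef, hWdef]
    simp [h0, hQ0, hEdef]
  have hgd : ∀ t, HasDerivAt g (2 * K t - E) t := fun t => by
    have h := HasDerivAt.inner ℝ (hQd t) (hQ'd t)
    refine h.congr_deriv ?_
    have hc := hcons t
    rw [inner_neg_right]
    rw [hWdef] at hc
    rw [hKdef] at hc ⊢
    linarith
  -- continuity
  have hgc : Continuous g := by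
    have : Differentiable ℝ g := fun x => (hgd x).differentiableAt
    exact this.continuous
  have hIc : Continuous I := by
    have : Differentiable ℝ I := fun x => (hId x).differentiableAt
    exact this.continuous
  -- g t ≥ -E t on [0, ∞)
  have hφd : ∀ x, HasDerivAt (fun t => g t + E * t) (2 * K x) x := fun x => by
    have h := (hgd x).add ((hasDerivAt_id x).const_mul E)
    refine h.congr_deriv ?_
    ring
  have hφ : MonotoneOn (fun t => g t + E * t) (Ici 0) := by
    refine monoIci ?_ (fun x _ => hφd x) (fun x _ => by linarith [hKnn x])
    exact (hgc.add (continuous_const.mul continuous_id)).continuousOn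
  have hg0 : g 0 = 0 := by simp [hgdef, h0]
  have hgE : ∀ t ∈ Ici (0:ℝ), -E * t ≤ g t := fun t ht => by
    have h := hφ self_mem_Ici ht ht
    simp only [hg0] at h
    linarith
  have hgnn : ∀ t ∈ Ici (0:ℝ), 0 ≤ g t := fun t ht =>
    le_trans (mul_nonneg (by linarith) ht) (hgE t ht)
  -- I monotone, bounded below
  have hImono : MonotoneOn I (Ici 0) :=
    monoIci hIc.continuousOn (fun x _ => hId x)
      (fun x hx => by linarith [hgnn x (Ioi_subset_Ici_self hx)])
  have hI0 : I 0 = ‖Q₀‖ ^ 2 := by rw [hInorm 0, hQ0]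
  have hIlb : ∀ t ∈ Ici (0:ℝ), ‖Q₀‖ ^ 2 ≤ I t := fun t ht =>
    hI0 ▸ hImono self_mem_Ici ht ht
  have hIpos : ∀ t ∈ Ici (0:ℝ), 0 < I t := fun t ht =>
    lt_of_lt_of_le hQ₀pos (hIlb t ht)
  -- I t ≥ ‖Q₀‖² - E t², hence I → ∞
  have hχd : ∀ x, HasDerivAt (fun t => I t + E * t ^ 2) (2 * g x + 2 * E * x) x := fun x => by
    have h := (hId x).add ((hasDerivAt_pow 2 x).const_mul E)
    refine h.congr_deriv ?_
    push_cast
    ring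
  have hχ : MonotoneOn (fun t => I t + E * t ^ 2) (Ici 0) := by
    refine monoIci ?_ (fun x _ => hχd x) (fun x hx => by linarith [hgE x (Ioi_subset_Ici_self hx)])
    exact (hIc.add (continuous_const.mul (continuous_pow 2))).continuousOn
  have hIquad : ∀ t ∈ Ici (0:ℝ), ‖Q₀‖ ^ 2 - E * t ^ 2 ≤ I t := fun t ht => by
    have h := hχ self_mem_Ici ht ht
    simp only [hI0] at h
    norm_num at h
    linarith
  have hItop : Tendsto I atTop atTop := by
    have h2 : Tendsto (fun t : ℝ => -E * t ^ 2) atTop atTop :=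
      (tendsto_pow_atTop (by norm_num : (2:ℕ) ≠ 0)).const_mul_atTop (by linarith)
    have h1 : Tendsto (fun t : ℝ => ‖Q₀‖ ^ 2 - E * t ^ 2) atTop atTop :=
      (tendsto_atTop_add_const_left atTop (‖Q₀‖ ^ 2) h2).congr (fun t => by ring)
    refine tendsto_atTop_mono' atTop ?_ h1
    filter_upwards [eventually_ge_atTop (0:ℝ)] with t ht using hIquad t ht
  -- F := (g² - E I)/I² is monotone on [0, ∞)
  set F : ℝ → ℝ := fun t => (g t ^ 2 - E * I t) / (I t) ^ 2 with hFdef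
  have hFd : ∀ x ∈ Ioi (0:ℝ),
      HasDerivAt F (4 * g x * I x * (K x * I x - g x ^ 2) / ((I x ^ 2) ^ 2)) x := fun x hx => by
    have hne : I x ≠ 0 := (hIpos x (Ioi_subset_Ici_self hx)).ne'
    have h := (((hgd x).pow 2).sub ((hId x).const_mul E)).div ((hId x).pow 2)
      (pow_ne_zero 2 hne)
    refine h.congr_deriv ?_
    simp only [Pi.pow_apply, Pi.sub_apply]
    congr 1
    push_cast
    ring
  have hFmono : MonotoneOn F (Ici 0) := by
    refine monoIci ?_ hFd ?_
    · exact ContinuousOn.div ((hgc.pow 2).sub (continuous_const.mul hIc)).continuousOn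
        (hIc.pow 2).continuousOn (fun x hx => pow_ne_zero 2 (hIpos x hx).ne')
    · intro x hx
      have h1 := hgnn x (Ioi_subset_Ici_self hx)
      have h2 := (hIpos x (Ioi_subset_Ici_self hx)).le
      have h3 := hCS x
      apply div_nonneg _ (by positivity)
      have h4 : 0 ≤ K x * I x - g x ^ 2 := by linarith [h3, mul_comm (I x) (K x)]
      exact mul_nonneg (mul_nonneg (mul_nonneg (by norm_num) h1) h2) h4
  have hF0 : F 0 = -E / ‖Q₀‖ ^ 2 := by
    show (g 0 ^ 2 - E * I 0) / (I 0) ^ 2 = -E / ‖Q₀‖ ^ 2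
    rw [hg0, hI0]
    field_simp
    ring
  -- choose β with α < β and β² < ω²
  set ω2 : ℝ := -E / ‖Q₀‖ ^ 2 with hω2def
  have hω2 : α ^ 2 < ω2 := by
    rw [hω2def, lt_div_iff₀ hQ₀pos]
    nlinarith
  have hω2pos : 0 < ω2 := lt_trans (by positivity) hω2
  set b2 : ℝ := (α ^ 2 + ω2) / 2 with hb2def
  have hb2a : α ^ 2 < b2 := by rw [hb2def]; linarith
  have hb2ω : b2 < ω2 := by rw [hb2def]; linarith
  have hb2pos : 0 < b2 := lt_trans (by positivity) hb2a
  set β := Real.sqrt b2 with hβdef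
  have hβ2 : β ^ 2 = b2 := Real.sq_sqrt hb2pos.le
  have hβpos : 0 < β := Real.sqrt_pos.2 hb2pos
  have hαβ : α < β := by nlinarith
  -- threshold T
  obtain ⟨T, hT⟩ : ∃ T : ℝ, ∀ t ≥ T, 0 ≤ t ∧ -E / (ω2 - b2) ≤ I t := by
    have h1 := hItop.eventually_ge_atTop (-E / (ω2 - b2))
    have h2 := eventually_ge_atTop (0:ℝ)
    exact eventually_atTop.1 (h2.and h1)
  have hgβ : ∀ t ≥ T, β * I t ≤ g t := fun t ht => by
    obtain ⟨ht0, htI⟩ := hT t ht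
    have hF := hFmono self_mem_Ici ht0 ht0
    rw [hF0] at hF
    have hIp := hIpos t ht0
    have h2 : ω2 * I t ^ 2 ≤ g t ^ 2 - E * I t := (le_div_iff₀ (pow_pos hIp 2)).1 hF
    have h3 : -E ≤ I t * (ω2 - b2) := (div_le_iff₀ (by linarith : (0:ℝ) < ω2 - b2)).1 htI
    have h4 : b2 * I t ^ 2 ≤ g t ^ 2 := by nlinarith [mul_le_mul_of_nonneg_right h3 hIp.le]
    have hg := hgnn t ht0
    nlinarith [mul_pos hβpos hIp, sq_nonneg (g t - β * I t), sq_nonneg (g t + β * I t)]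
  -- exponential growth of I
  have hexp : ∀ x : ℝ, HasDerivAt (fun t => Real.exp (-(2*β)*t))
      (-(2*β) * Real.exp (-(2*β)*x)) x := fun x => by
    have h := ((hasDerivAt_id x).const_mul (-(2*β))).exp
    refine h.congr_deriv ?_
    simp only [id_eq]
    ring
  have hLd : ∀ x, HasDerivAt (fun t => I t * Real.exp (-(2*β)*t))
      ((2 * g x - 2 * β * I x) * Real.exp (-(2*β)*x)) x := fun x => by
    have h := (hId x).mul (hexp x)
    refine h.congr_deriv ?_
    ring
  have hLc : Continuous fun t => I t * Real.exp (-(2*β)*t) :=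
    hIc.mul (Real.continuous_exp.comp (continuous_const.mul continuous_id))
  have hLmono : MonotoneOn (fun t => I t * Real.exp (-(2*β)*t)) (Ici T) :=
    monoIci hLc.continuousOn (fun x _ => hLd x)
      (fun x hx => mul_nonneg (by linarith [hgβ x (le_of_lt hx)]) (Real.exp_pos _).le)
  set c := I T * Real.exp (-(2*β)*T) with hcdef
  have hT0 : 0 ≤ T := (hT T le_rfl).1
  have hcpos : 0 < c := mul_pos (hIpos T hT0) (Real.exp_pos _)
  have hIexp : ∀ t ≥ T, c * Real.exp (2*β*t) ≤ I t := fun t ht => by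
    have h := hLmono self_mem_Ici ht ht
    have he := (Real.exp_pos (2*β*t)).le
    calc c * Real.exp (2*β*t) ≤ (I t * Real.exp (-(2*β)*t)) * Real.exp (2*β*t) :=
          mul_le_mul_of_nonneg_right h he
      _ = I t := by
          rw [mul_assoc, ← Real.exp_add, show -(2*β)*t + 2*β*t = 0 by ring,
            Real.exp_zero, mul_one]
  -- K ≥ b2 · I for t ≥ T
  have hKI : ∀ t ≥ T, b2 * I t ≤ K t := fun t ht => by
    have hIp := hIpos t (hT t ht).1
    have h1 := hgβ t ht
    have h2 := hCS t
    have h5 : (β * I t) ^ 2 ≤ g t ^ 2 :=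
      mul_self_le_mul_self (mul_nonneg hβpos.le hIp.le) h1 |>.trans_eq (by ring) |>.trans_eq' (by ring)
    have hb : b2 * I t ^ 2 = (β * I t) ^ 2 := by rw [mul_pow, hβ2]
    have h6 : b2 * I t ^ 2 ≤ I t * K t := by linarith [h5, h2, hb]
    nlinarith [h6, hIp]
  -- conclusion
  have hlow : Tendsto (fun t => (b2 * c) * Real.exp ((2*β - 2*α)*t)) atTop atTop := by
    refine Tendsto.const_mul_atTop (mul_pos hb2pos hcpos) ?_
    exact Real.tendsto_exp_atTop.comp (tendsto_id.const_mul_atTop (by linarith))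
  refine tendsto_atTop_mono' atTop ?_ hlow
  filter_upwards [eventually_ge_atTop T] with t ht
  have hK := hKI t ht
  have hI := hIexp t ht
  rw [← hKnorm t]
  have hKge : b2 * (c * Real.exp (2*β*t)) ≤ K t :=
    le_trans (mul_le_mul_of_nonneg_left hI hb2pos.le) hK
  have hepos := (Real.exp_pos (-2*α*t)).le
  calc (b2 * c) * Real.exp ((2*β - 2*α)*t)
      = Real.exp (-2*α*t) * (b2 * (c * Real.exp (2*β*t))) := by
        rw [show (2*β - 2*α)*t = (-2*α*t) + 2*β*t by ring, Real.exp_add]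
        ring
    _ ≤ Real.exp (-2*α*t) * K t := mul_le_mul_of_nonneg_left hKge hepos
end

section
/- Let V be a finite-dimensional real inner product space, φ ∈ V a nonzero vector, and let R : V →ₗ[ℝ] V be the reflection R x = x − (2 ⟪x, φ⟫ / ⟪φ, φ⟫) φ (so R φ = −φ and R fixes the orthogonal complement of φ). Let S : V × V → ℝ be a symmetric bilinear form satisfying S(R x, R y) = −S(x, y) for all x, y ∈ V. Then there exists a unique vector λ ∈ V with ⟪λ, φ⟫ = 0 such that S(x, y) = ⟪λ, x⟫ ⟪φ, y⟫ + ⟪φ, x⟫ ⟪λ, y⟫ for all x, y ∈ V. -/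
open scoped RealInnerProductSpace

/-- Pointwise form of the paper's claim that a symmetric tensor odd under the
reflection `R` negating `φ` and fixing `φ^⊥` has the form
`S(x,y) = ⟪λ,x⟫⟪φ,y⟫ + ⟪φ,x⟫⟪λ,y⟫` with `λ ⊥ φ`, uniquely. -/
theorem stmt_10 {V : Type*} [NormedAddCommGroup V] [InnerProductSpace ℝ V]
    [FiniteDimensional ℝ V] (φ : V) (hφ : φ ≠ 0)
    (S : V →ₗ[ℝ] V →ₗ[ℝ] ℝ) (hSsymm : ∀ x y : V, S x y = S y x)
    (hodd : ∀ x y : V,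
      S (x - (2 * ⟪x, φ⟫ / ⟪φ, φ⟫) • φ) (y - (2 * ⟪y, φ⟫ / ⟪φ, φ⟫) • φ)
        = -S x y) :
    ∃! lam : V, ⟪lam, φ⟫ = 0 ∧
      ∀ x y : V, S x y = ⟪lam, x⟫ * ⟪φ, y⟫ + ⟪φ, x⟫ * ⟪lam, y⟫ := by
  have hp : (⟪φ, φ⟫ : ℝ) ≠ 0 := by
    simpa [inner_self_eq_zero] using hφ
  -- S φ φ = 0
  have h00 : S φ φ = 0 := by
    have h := hodd φ φ
    rw [mul_div_assoc, div_self hp, mul_one] at h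
    have hφφ : φ - (2:ℝ) • φ = -φ := by
      rw [two_smul]; abel
    rw [hφφ] at h
    simp only [map_neg, LinearMap.neg_apply, neg_neg] at h
    linarith
  -- key expansion
  have key : ∀ x y : V, S x y = ⟪x, φ⟫ / ⟪φ, φ⟫ * S φ y + ⟪y, φ⟫ / ⟪φ, φ⟫ * S φ x := by
    intro x y
    have h := hodd x y
    simp only [map_sub, map_smul, LinearMap.sub_apply, LinearMap.smul_apply,
      smul_eq_mul, h00, mul_zero] at h
    rw [hSsymm x φ] at h
    field_simp at h ⊢
    ring_nf at h ⊢
    linarith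
  -- define lam via Riesz representation
  set f : V →ₗ[ℝ] ℝ := (⟪φ, φ⟫)⁻¹ • S φ with hf
  set lam : V := (InnerProductSpace.toDual ℝ V).symm (LinearMap.toContinuousLinearMap f)
    with hlam
  have hlam_inner : ∀ z : V, ⟪lam, z⟫ = (⟪φ, φ⟫)⁻¹ * S φ z := by
    intro z
    rw [hlam, InnerProductSpace.toDual_symm_apply]
    simp [hf]
  refine ⟨lam, ⟨?_, ?_⟩, ?_⟩
  · rw [hlam_inner, h00, mul_zero]
  · intro x y
    rw [hlam_inner, hlam_inner, key x y, real_inner_comm φ x, real_inner_comm φ y]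
    field_simp
    ring
  · rintro lam' ⟨h0', hS'⟩
    have hval : ∀ x : V, ⟪lam', x⟫ = ⟪lam, x⟫ := by
      intro x
      have h1 := hS' x φ
      rw [h0', mul_zero, add_zero] at h1
      have h2 : S x φ = ⟪x, φ⟫ / ⟪φ, φ⟫ * S φ φ + ⟪φ, φ⟫ / ⟪φ, φ⟫ * S φ x := key x φ
      rw [h00, mul_zero, zero_add, div_self hp, one_mul] at h2
      have h3 : ⟪lam', x⟫ * ⟪φ, φ⟫ = S φ x := by rw [← h2, ← h1, hSsymm]
      rw [hlam_inner]
      field_simp [← h3]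
      exact h3
    refine ext_inner_left ℝ fun v => ?_
    linarith [hval v, real_inner_comm v lam', real_inner_comm v lam]
end
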